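/- For M, M' ∈ sl₂(ℝ) (trace-zero 2×2 matrices), X, X' N×2 real matrices, and κ, κ' symmetric N×N real matrices, the matrix commutator of the (2N+2)×(2N+2) block matrices [[0, X, κ], [0, M, −J₂Xᵀ], [0, 0, 0]] and [[0, X', κ'], [0, M', −J₂X'ᵀ], [0, 0, 0]] equals the block matrix associated in the same way to the triple ([M, M'], X·M' − X'·M, X'·J₂·Xᵀ − X·J₂·X'ᵀ); in particular the last entry is again symmetric. -/

import Mathlib

open Matrix Complex

noncomputable section

def J2 : Matrix (Fin 2) (Fin 2) ℝ := !![0, -1; 1, 0]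

/-- The Lie-algebra style block matrix `[[0, X, κ], [0, M, −J₂Xᵀ], [0, 0, 0]]`
with blocks of sizes N, 2, N. -/
def jPsi {N : ℕ} (M : Matrix (Fin 2) (Fin 2) ℝ) (X : Matrix (Fin N) (Fin 2) ℝ)
    (κ : Matrix (Fin N) (Fin N) ℝ) :
    Matrix (Fin N ⊕ (Fin 2 ⊕ Fin N)) (Fin N ⊕ (Fin 2 ⊕ Fin N)) ℝ :=
  fromBlocks 0 (fromCols X κ) 0
    (fromBlocks M (-(J2 * X.transpose)) 0 0)

/-- The matrix commutator of the block matrices associated to `(M, X, κ)` and `(M', X', κ')`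
is the block matrix associated to `([M,M'], X·M' − X'·M, X'·J₂·Xᵀ − X·J₂·X'ᵀ)`; in particular
the last entry is again symmetric. -/
lemma mul_J2_of_trace (M : Matrix (Fin 2) (Fin 2) ℝ) (h : M.trace = 0) :
    M * J2 = -(J2 * M.transpose) := by
  rw [Matrix.trace_fin_two] at h
  ext i j
  fin_cases i <;> fin_cases j <;>
    simp [J2, Matrix.mul_apply, Matrix.vecMul, dotProduct, Fin.sum_univ_two] <;> linarith

lemma fromBlocks_sub' {n m l o : Type*} (A A' : Matrix n l ℝ) (B B' : Matrix n m ℝ)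
    (C C' : Matrix o l ℝ) (D D' : Matrix o m ℝ) :
    fromBlocks A B C D - fromBlocks A' B' C' D' =
      fromBlocks (A - A') (B - B') (C - C') (D - D') := by
  ext (i | i) (j | j) <;> simp [Matrix.fromBlocks]

lemma fromColumns_sub' {n m l : Type*} (A A' : Matrix n m ℝ) (B B' : Matrix n l ℝ) :
    fromCols A B - fromCols A' B' = fromCols (A - A') (B - B') := by
  ext i (j | j) <;> simp [Matrix.fromCols]

theorem jPsi_bracket (N : ℕ) (M M' : Matrix (Fin 2) (Fin 2) ℝ)
    (X X' : Matrix (Fin N) (Fin 2) ℝ) (κ κ' : Matrix (Fin N) (Fin N) ℝ)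
    (hM : M.trace = 0) (hM' : M'.trace = 0) (hκ : κ.IsSymm) (hκ' : κ'.IsSymm) :
    jPsi M X κ * jPsi M' X' κ' - jPsi M' X' κ' * jPsi M X κ =
      jPsi (M * M' - M' * M) (X * M' - X' * M)
        (X' * J2 * X.transpose - X * J2 * X'.transpose) ∧
    (X' * J2 * X.transpose - X * J2 * X'.transpose).IsSymm := by
  have e2 : M' * J2 = -(J2 * M'.transpose) := mul_J2_of_trace M' hM'
  have e3 : M * J2 = -(J2 * M.transpose) := mul_J2_of_trace M hM
  constructor
  · unfold jPsi
    simp only [Matrix.fromBlocks_multiply, Matrix.fromCols_mul_fromBlocks,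
      Matrix.mul_zero, Matrix.zero_mul, add_zero, zero_add, mul_zero, zero_mul,
      fromBlocks_sub', fromColumns_sub', sub_zero]
    have h1 : X * -(J2 * X'ᵀ) - X' * -(J2 * Xᵀ) = X' * J2 * Xᵀ - X * J2 * X'ᵀ := by
      rw [Matrix.mul_neg, Matrix.mul_neg, ← Matrix.mul_assoc, ← Matrix.mul_assoc]
      abel
    have h2 : M * -(J2 * X'ᵀ) - M' * -(J2 * Xᵀ) = -(J2 * (X * M' - X' * M)ᵀ) := by
      rw [Matrix.transpose_sub, Matrix.transpose_mul, Matrix.transpose_mul, Matrix.mul_sub,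
        Matrix.mul_neg, Matrix.mul_neg, ← Matrix.mul_assoc, ← Matrix.mul_assoc, e2, e3]
      simp only [Matrix.neg_mul, Matrix.mul_assoc, neg_neg, neg_sub]
    rw [h1, h2]
  · rw [Matrix.IsSymm]
    simp only [Matrix.transpose_sub, Matrix.transpose_mul, Matrix.transpose_transpose]
    have hJ : J2.transpose = -J2 := by
      ext i j; fin_cases i <;> fin_cases j <;> simp [J2]
    rw [hJ]
    simp only [Matrix.mul_neg, Matrix.neg_mul, Matrix.mul_assoc]
    abel
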